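/- Let n be even, fix plant matrices A, B, C ∈ ℝ^{n×n}, B_w, D_w ∈ ℝ^{n×n_w}, C_z, D_z ∈ ℝ^{n_z×n}, a real skew-symmetric matrix Θ_K ∈ ℝ^{n×n}, and γ > 0. Suppose A_K, B_K1, B_K2, B_K3, C_K ∈ ℝ^{n×n} solve the standard LQG problem with bound γ (i.e. there exists a symmetric positive definite P ∈ ℝ^{2n×2n} with 𝒜P + P𝒜ᵀ + ℬℬᵀ = 0 and tr(𝒞P𝒞ᵀ) < γ for the closed-loop matrices), that there exists a real skew-symmetric matrix Z ∈ ℝ^{n×n} satisfying A_K Z + Z A_Kᵀ + Σ_{i=1}^{3} B_Ki·diag_{n/2}(J)·B_Kiᵀ = 0 and B_K1 = Z C_Kᵀ diag_{n/2}(J), and that there exists a real invertible matrix S with S Z Sᵀ = Θ_K. Then the matrices Â_K = S A_K S⁻¹, B̂_Ki = S B_Ki (i = 1,2,3), Ĉ_K = C_K S⁻¹ solve the quantum LQG problem with bound γ and commutation matrix Θ_K: the corresponding closed-loop Lyapunov equation has a symmetric positive definite solution with LQG cost strictly less than γ, and the hatted controller matrices satisfy the physical realizability constraints with Θ_K. 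-/

import Mathlib

noncomputable section
open Matrix

/-- The `n × n` block-diagonal matrix `diag(J, …, J)` with `n/2` copies of
`J = [[0,1],[-1,0]]` on the diagonal (for even `n`). -/
def Jblock (n : ℕ) : Matrix (Fin n) (Fin n) ℝ :=
  Matrix.of fun i j =>
    if i.val + 1 = j.val ∧ i.val % 2 = 0 then (1 : ℝ)
    else if j.val + 1 = i.val ∧ j.val % 2 = 0 then (-1 : ℝ) else 0

/-- Closed-loop `𝒜 = [[A, B C_K],[B_K3 C, A_K]]`. -/
def clA (n : ℕ) (A B C AK BK3 CK : Matrix (Fin n) (Fin n) ℝ) :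
    Matrix (Fin n ⊕ Fin n) (Fin n ⊕ Fin n) ℝ :=
  Matrix.fromBlocks A (B * CK) (BK3 * C) AK

/-- Closed-loop `ℬ = [[B_w, B, 0],[B_K3 D_w, B_K1, B_K2]]`. -/
def clB (n nw : ℕ) (B : Matrix (Fin n) (Fin n) ℝ) (Bw Dw : Matrix (Fin n) (Fin nw) ℝ)
    (BK1 BK2 BK3 : Matrix (Fin n) (Fin n) ℝ) :
    Matrix (Fin n ⊕ Fin n) (Fin nw ⊕ (Fin n ⊕ Fin n)) ℝ :=
  Matrix.fromBlocks Bw (Matrix.fromCols B 0) (BK3 * Dw) (Matrix.fromCols BK1 BK2)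

/-- Closed-loop `𝒞 = [C_z, D_z C_K]`. -/
def clC (n nz : ℕ) (Cz Dz : Matrix (Fin nz) (Fin n) ℝ)
    (CK : Matrix (Fin n) (Fin n) ℝ) : Matrix (Fin nz) (Fin n ⊕ Fin n) ℝ :=
  Matrix.fromCols Cz (Dz * CK)

/-- The physical realizability constraints with commutation matrix `Θ_K`. -/
def PhysReal (n : ℕ) (ΘK AK BK1 BK2 BK3 CK : Matrix (Fin n) (Fin n) ℝ) : Prop :=
  AK * ΘK + ΘK * AKᵀ
      + BK1 * Jblock n * BK1ᵀ + BK2 * Jblock n * BK2ᵀ + BK3 * Jblock n * BK3ᵀ = 0 ∧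
  BK1 = ΘK * CKᵀ * Jblock n

lemma posDef_conj {m : Type*} [Fintype m] [DecidableEq m]
    {P : Matrix m m ℝ} (hP : P.PosDef) (T : Matrix m m ℝ) (hT : IsUnit T.det) :
    (T * P * Tᵀ).PosDef := by
  rw [Matrix.posDef_iff_dotProduct_mulVec]
  constructor
  · show (T * P * Tᵀ)ᴴ = T * P * Tᵀ
    have hP1 : Pᴴ = P := hP.1
    have hstar : ∀ M : Matrix m m ℝ, Mᴴ = Mᵀ := fun M => by
      ext i j; simp [conjTranspose_apply]
    have hPt : Pᵀ = P := by rw [← hstar]; exact hP1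
    simp only [hstar, transpose_mul, transpose_transpose, hPt, Matrix.mul_assoc]
  · intro x hx
    have hTt : IsUnit (Tᵀ).det := by rwa [Matrix.det_transpose]
    have hy : Tᵀ *ᵥ x ≠ 0 := by
      intro h
      have hid : (Tᵀ)⁻¹ *ᵥ (Tᵀ *ᵥ x) = x := by
        rw [Matrix.mulVec_mulVec, Matrix.nonsing_inv_mul _ hTt, Matrix.one_mulVec]
      exact hx (by rw [← hid, h, Matrix.mulVec_zero])
    have hpos := (Matrix.posDef_iff_dotProduct_mulVec.mp hP).2 hy
    have key : x ⬝ᵥ (T * P * Tᵀ) *ᵥ x = (Tᵀ *ᵥ x) ⬝ᵥ P *ᵥ (Tᵀ *ᵥ x) := by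
      rw [← Matrix.mulVec_mulVec, ← Matrix.mulVec_mulVec, Matrix.dotProduct_mulVec,
        ← Matrix.mulVec_transpose]
    have hstar2 : star x = x := rfl
    have hstar3 : star (Tᵀ *ᵥ x) = Tᵀ *ᵥ x := rfl
    rw [hstar2, key]
    rwa [hstar3] at hpos

/-- if `A_K, B_Ki, C_K` solve the standard LQG problem with bound `γ`,
there is a real skew-symmetric `Z` satisfying the realizability equations for the
unhatted matrices, and an invertible `S` with `S Z Sᵀ = Θ_K`, then the transformed
matrices solve the quantum LQG problem with bound `γ` and commutation matrix `Θ_K`. -/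
theorem standard_lqg_to_quantum_lqg
    (n nw nz : ℕ) (hne : Even n)
    (A B C : Matrix (Fin n) (Fin n) ℝ)
    (Bw Dw : Matrix (Fin n) (Fin nw) ℝ)
    (Cz Dz : Matrix (Fin nz) (Fin n) ℝ)
    (ΘK : Matrix (Fin n) (Fin n) ℝ) (hskewΘ : ΘKᵀ = -ΘK)
    (γ : ℝ) (hγ : 0 < γ)
    (AK BK1 BK2 BK3 CK : Matrix (Fin n) (Fin n) ℝ)
    (hlqg : ∃ P : Matrix (Fin n ⊕ Fin n) (Fin n ⊕ Fin n) ℝ, P.PosDef ∧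
      clA n A B C AK BK3 CK * P + P * (clA n A B C AK BK3 CK)ᵀ
        + clB n nw B Bw Dw BK1 BK2 BK3 * (clB n nw B Bw Dw BK1 BK2 BK3)ᵀ = 0 ∧
      (clC n nz Cz Dz CK * P * (clC n nz Cz Dz CK)ᵀ).trace < γ)
    (Z : Matrix (Fin n) (Fin n) ℝ) (hskewZ : Zᵀ = -Z)
    (hZpr : PhysReal n Z AK BK1 BK2 BK3 CK)
    (S : Matrix (Fin n) (Fin n) ℝ) (hS : IsUnit S.det)
    (hSZ : S * Z * Sᵀ = ΘK) :
    -- the hatted (transformed) controller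
    let AKh := S * AK * S⁻¹
    let BK1h := S * BK1
    let BK2h := S * BK2
    let BK3h := S * BK3
    let CKh := CK * S⁻¹
    (∃ P' : Matrix (Fin n ⊕ Fin n) (Fin n ⊕ Fin n) ℝ, P'.PosDef ∧
      clA n A B C AKh BK3h CKh * P' + P' * (clA n A B C AKh BK3h CKh)ᵀ
        + clB n nw B Bw Dw BK1h BK2h BK3h * (clB n nw B Bw Dw BK1h BK2h BK3h)ᵀ = 0 ∧
      (clC n nz Cz Dz CKh * P' * (clC n nz Cz Dz CKh)ᵀ).trace < γ) ∧
    PhysReal n ΘK AKh BK1h BK2h BK3h CKh := by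
  intro AKh BK1h BK2h BK3h CKh
  have e1 : AKh = S * AK * S⁻¹ := rfl
  have e2 : BK1h = S * BK1 := rfl
  have e3 : BK2h = S * BK2 := rfl
  have e4 : BK3h = S * BK3 := rfl
  have e5 : CKh = CK * S⁻¹ := rfl
  have hSinv : S * S⁻¹ = 1 := Matrix.mul_nonsing_inv S hS
  have hSinv' : S⁻¹ * S = 1 := Matrix.nonsing_inv_mul S hS
  have hSt : Sᵀ * (S⁻¹)ᵀ = 1 := by
    rw [← Matrix.transpose_mul, hSinv', Matrix.transpose_one]
  set T : Matrix (Fin n ⊕ Fin n) (Fin n ⊕ Fin n) ℝ := Matrix.fromBlocks 1 0 0 S with hTdef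
  set Ti : Matrix (Fin n ⊕ Fin n) (Fin n ⊕ Fin n) ℝ := Matrix.fromBlocks 1 0 0 S⁻¹ with hTidef
  have hTiT : Ti * T = 1 := by
    rw [hTidef, hTdef, Matrix.fromBlocks_multiply]
    simp [hSinv', ← Matrix.fromBlocks_one]
  have hTt : Tᵀ * Tiᵀ = 1 := by
    rw [← Matrix.transpose_mul, hTiT, Matrix.transpose_one]
  have hTdet : IsUnit T.det := by
    rw [hTdef, Matrix.det_fromBlocks_zero₂₁]
    simpa using hS
  obtain ⟨P, hPpd, hLyap, htr⟩ := hlqg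
  have hA' : clA n A B C AKh BK3h CKh = T * clA n A B C AK BK3 CK * Ti := by
    rw [e1, e4, e5]
    simp [clA, hTdef, hTidef, Matrix.fromBlocks_multiply, Matrix.mul_assoc]
  have hB' : clB n nw B Bw Dw BK1h BK2h BK3h = T * clB n nw B Bw Dw BK1 BK2 BK3 := by
    rw [e2, e3, e4]
    simp [clB, hTdef, Matrix.fromBlocks_multiply, Matrix.mul_fromCols, Matrix.mul_assoc]
  have hC' : clC n nz Cz Dz CKh = clC n nz Cz Dz CK * Ti := by
    rw [e5]
    simp [clC, hTidef, Matrix.fromCols_mul_fromBlocks, Matrix.mul_assoc]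
  refine ⟨⟨T * P * Tᵀ, posDef_conj hPpd T hTdet, ?_, ?_⟩, ?_, ?_⟩
  · rw [hA', hB']
    set Acl := clA n A B C AK BK3 CK
    set Bcl := clB n nw B Bw Dw BK1 BK2 BK3
    have u1 : T * Acl * Ti * (T * P * Tᵀ) = T * (Acl * P) * Tᵀ := by
      calc T * Acl * Ti * (T * P * Tᵀ) = T * Acl * (Ti * T) * (P * Tᵀ) := by
            noncomm_ring
        _ = T * (Acl * P) * Tᵀ := by rw [hTiT]; noncomm_ring
    have u2 : T * P * Tᵀ * (T * Acl * Ti)ᵀ = T * (P * Aclᵀ) * Tᵀ := by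
      calc T * P * Tᵀ * (T * Acl * Ti)ᵀ = T * P * (Tᵀ * Tiᵀ) * (Aclᵀ * Tᵀ) := by
            simp only [Matrix.transpose_mul]; noncomm_ring
        _ = T * (P * Aclᵀ) * Tᵀ := by rw [hTt]; noncomm_ring
    have u3 : T * Bcl * (T * Bcl)ᵀ = T * (Bcl * Bclᵀ) * Tᵀ := by
      simp only [Matrix.transpose_mul]
      simp only [Matrix.mul_assoc]
    rw [u1, u2, u3]
    have hsum : T * (Acl * P) * Tᵀ + T * (P * Aclᵀ) * Tᵀ + T * (Bcl * Bclᵀ) * Tᵀ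
        = T * (Acl * P + P * Aclᵀ + Bcl * Bclᵀ) * Tᵀ := by noncomm_ring
    rw [hsum, hLyap]
    simp
  · rw [hC']
    set Ccl := clC n nz Cz Dz CK
    have u4 : Ccl * Ti * (T * P * Tᵀ) * (Ccl * Ti)ᵀ = Ccl * P * Cclᵀ := by
      simp only [Matrix.transpose_mul, Matrix.mul_assoc]
      rw [show Tᵀ * (Tiᵀ * Cclᵀ) = Tᵀ * Tiᵀ * Cclᵀ from (Matrix.mul_assoc _ _ _).symm,
        hTt, Matrix.one_mul,
        show Ti * (T * (P * Cclᵀ)) = Ti * T * (P * Cclᵀ) from (Matrix.mul_assoc _ _ _).symm,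
        hTiT, Matrix.one_mul]
    rw [u4]
    exact htr
  · rw [e1, e2, e3, e4, ← hSZ]
    have t1 : S * AK * S⁻¹ * (S * Z * Sᵀ) = S * (AK * Z) * Sᵀ := by
      calc S * AK * S⁻¹ * (S * Z * Sᵀ) = S * AK * (S⁻¹ * S) * (Z * Sᵀ) := by noncomm_ring
        _ = S * (AK * Z) * Sᵀ := by rw [hSinv']; noncomm_ring
    have t2 : S * Z * Sᵀ * (S * AK * S⁻¹)ᵀ = S * (Z * AKᵀ) * Sᵀ := by
      calc S * Z * Sᵀ * (S * AK * S⁻¹)ᵀ = S * Z * (Sᵀ * (S⁻¹)ᵀ) * (AKᵀ * Sᵀ) := by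
            simp only [Matrix.transpose_mul]; noncomm_ring
        _ = S * (Z * AKᵀ) * Sᵀ := by rw [hSt]; noncomm_ring
    have t3 : ∀ M : Matrix (Fin n) (Fin n) ℝ,
        S * M * Jblock n * (S * M)ᵀ = S * (M * Jblock n * Mᵀ) * Sᵀ := by
      intro M
      simp only [Matrix.transpose_mul]
      simp only [Matrix.mul_assoc]
    rw [t1, t2, t3 BK1, t3 BK2, t3 BK3]
    have hsum : S * (AK * Z) * Sᵀ + S * (Z * AKᵀ) * Sᵀ + S * (BK1 * Jblock n * BK1ᵀ) * Sᵀ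
        + S * (BK2 * Jblock n * BK2ᵀ) * Sᵀ + S * (BK3 * Jblock n * BK3ᵀ) * Sᵀ
        = S * (AK * Z + Z * AKᵀ + BK1 * Jblock n * BK1ᵀ + BK2 * Jblock n * BK2ᵀ
            + BK3 * Jblock n * BK3ᵀ) * Sᵀ := by noncomm_ring
    rw [hsum, hZpr.1]
    simp
  · rw [e2, e5, ← hSZ]
    have key : S * Z * Sᵀ * (CK * S⁻¹)ᵀ * Jblock n = S * (Z * CKᵀ * Jblock n) := by
      calc S * Z * Sᵀ * (CK * S⁻¹)ᵀ * Jblock n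
          = S * Z * (Sᵀ * (S⁻¹)ᵀ) * (CKᵀ * Jblock n) := by
            simp only [Matrix.transpose_mul]; noncomm_ring
        _ = S * (Z * CKᵀ * Jblock n) := by rw [hSt]; noncomm_ring
    rw [key, ← hZpr.2]
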